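/- Let M be any N×N real matrix and set A_c = I_N ⊗ A − c·M ⊗ (B₁kᵀ), B = I_N ⊗ B₂, C = I_N ⊗ C₁. For s ∈ ℂ define the N×N complex matrix H(s) = (τs³ + s²)·I_N + c·(k_p + k_v·s + k_a·s²)·M. If H(s) is invertible, then s·I_{3N} − A_c is invertible and C·(s·I_{3N} − A_c)⁻¹·B = H(s)⁻¹. -/

import Mathlib

open Matrix
open scoped Kronecker

private theorem kron_sub {l m n p : Type*} (A : Matrix l m ℂ) (B C : Matrix n p ℂ) :
    A ⊗ₖ (B - C) = A ⊗ₖ B - A ⊗ₖ C := by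
  ext ⟨i, a⟩ ⟨j, b⟩
  simp [Matrix.kroneckerMap_apply, mul_sub]

set_option maxHeartbeats 1000000 in
/-- The closed-loop platoon transfer function: if
`H(s) = (τs³+s²) I_N + c (k_p + k_v s + k_a s²) M` is invertible, then
`s I_{3N} - A_c` is invertible and `C (s I_{3N} - A_c)⁻¹ B = H(s)⁻¹`
(entrywise, identifying `Fin N × Fin 1` with `Fin N`). -/
theorem stmt_6 (τ kp kv ka c : ℝ) (hτ : 0 < τ) (N : ℕ)
    (A : Matrix (Fin 3) (Fin 3) ℝ) (hA : A = !![0, 1, 0; 0, 0, 1; 0, 0, -(1 / τ)])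
    (B1 B2 : Matrix (Fin 3) (Fin 1) ℝ) (hB1 : B1 = !![0; 0; 1 / τ]) (hB2 : B2 = B1)
    (C1 : Matrix (Fin 1) (Fin 3) ℝ) (hC1 : C1 = !![1, 0, 0])
    (kT : Matrix (Fin 1) (Fin 3) ℝ) (hkT : kT = !![kp, kv, ka])
    (M : Matrix (Fin N) (Fin N) ℝ)
    (Ac : Matrix (Fin N × Fin 3) (Fin N × Fin 3) ℝ)
    (hAc : Ac = (1 : Matrix (Fin N) (Fin N) ℝ) ⊗ₖ A - c • (M ⊗ₖ (B1 * kT)))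
    (Bb : Matrix (Fin N × Fin 3) (Fin N × Fin 1) ℝ)
    (hBb : Bb = (1 : Matrix (Fin N) (Fin N) ℝ) ⊗ₖ B2)
    (Cc : Matrix (Fin N × Fin 1) (Fin N × Fin 3) ℝ)
    (hCc : Cc = (1 : Matrix (Fin N) (Fin N) ℝ) ⊗ₖ C1)
    (s : ℂ)
    (H : Matrix (Fin N) (Fin N) ℂ)
    (hH : H = ((τ : ℂ) * s ^ 3 + s ^ 2) • (1 : Matrix (Fin N) (Fin N) ℂ) +
      ((c : ℂ) * ((kp : ℂ) + (kv : ℂ) * s + (ka : ℂ) * s ^ 2)) •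
        M.map (Complex.ofReal : ℝ → ℂ))
    (hHs : IsUnit H.det) :
    IsUnit (s • (1 : Matrix (Fin N × Fin 3) (Fin N × Fin 3) ℂ) -
      Ac.map (Complex.ofReal : ℝ → ℂ)).det ∧
    ∀ i j : Fin N,
      (Cc.map (Complex.ofReal : ℝ → ℂ) *
        (s • (1 : Matrix (Fin N × Fin 3) (Fin N × Fin 3) ℂ) -
          Ac.map (Complex.ofReal : ℝ → ℂ))⁻¹ *
        Bb.map (Complex.ofReal : ℝ → ℂ)) (i, 0) (j, 0) = H⁻¹ i j := by
  have hτ0 : (τ : ℂ) ≠ 0 := by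
    exact_mod_cast ne_of_gt hτ
  subst hA hB1 hB2 hC1 hkT hAc hBb hCc
  set d : ℂ := (τ : ℂ) * s ^ 3 + s ^ 2 with hd
  set q : ℂ := (c : ℂ) * ((kp : ℂ) + (kv : ℂ) * s + (ka : ℂ) * s ^ 2) with hq
  set Mc : Matrix (Fin N) (Fin N) ℂ := M.map (Complex.ofReal : ℝ → ℂ) with hMc
  set Gc : Matrix (Fin 3) (Fin 3) ℂ := !![s, -1, 0; 0, s, -1; 0, 0, s + 1/(τ:ℂ)] with hGc
  set Fc : Matrix (Fin 3) (Fin 3) ℂ :=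
    !![0, 0, 0; 0, 0, 0; (c:ℂ)*(kp:ℂ)/(τ:ℂ), (c:ℂ)*(kv:ℂ)/(τ:ℂ), (c:ℂ)*(ka:ℂ)/(τ:ℂ)] with hFc
  set K1 : Matrix (Fin 3) (Fin 3) ℂ :=
    !![s*((τ:ℂ)*s+1), (τ:ℂ)*s+1, (τ:ℂ);
       s^2*((τ:ℂ)*s+1), s*((τ:ℂ)*s+1), (τ:ℂ)*s;
       s^3*((τ:ℂ)*s+1), s^2*((τ:ℂ)*s+1), (τ:ℂ)*s^2] with hK1
  set K2 : Matrix (Fin 3) (Fin 3) ℂ :=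
    !![(c:ℂ)*((kv:ℂ)+(ka:ℂ)*s), (c:ℂ)*(ka:ℂ), 0;
       s*((c:ℂ)*((kv:ℂ)+(ka:ℂ)*s)), s*((c:ℂ)*(ka:ℂ)), 0;
       s^2*((c:ℂ)*((kv:ℂ)+(ka:ℂ)*s)), s^2*((c:ℂ)*(ka:ℂ)), 0] with hK2
  set J : Matrix (Fin 3) (Fin 3) ℂ := !![0, 0, 0; 1, 0, 0; s, 1, 0] with hJ
  set W : Matrix (Fin 3) (Fin 3) ℂ :=
    !![0, 0, 0; 0, 0, 0; s*(s+1/(τ:ℂ)), s+1/(τ:ℂ), 1] with hW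
  set W2 : Matrix (Fin 3) (Fin 3) ℂ :=
    !![0, 0, 0; 0, 0, 0; (c:ℂ)*((kv:ℂ)+(ka:ℂ)*s)/(τ:ℂ), (c:ℂ)*(ka:ℂ)/(τ:ℂ), 0] with hW2
  -- decomposition of the resolvent matrix as a Kronecker sum
  have hL : s • (1 : Matrix (Fin N × Fin 3) (Fin N × Fin 3) ℂ) -
      ((1 : Matrix (Fin N) (Fin N) ℝ) ⊗ₖ !![0, 1, 0; 0, 0, 1; 0, 0, -(1 / τ)] -
        c • (M ⊗ₖ (!![0; 0; 1 / τ] * !![kp, kv, ka]))).map (Complex.ofReal : ℝ → ℂ)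
      = (1 : Matrix (Fin N) (Fin N) ℂ) ⊗ₖ Gc + Mc ⊗ₖ Fc := by
    have hBK : (!![0; 0; 1 / τ] * !![kp, kv, ka]) =
        !![0, 0, 0; 0, 0, 0; kp/τ, kv/τ, ka/τ] := by
      ext i' j'
      fin_cases i' <;> fin_cases j' <;>
        (simp [Matrix.mul_apply, Fin.sum_univ_one, Matrix.vecHead, Matrix.vecTail]; try ring; try field_simp; try ring)
    rw [hBK, hGc, hFc, hMc]
    ext ⟨i, a⟩ ⟨j, b⟩
    fin_cases a <;> fin_cases b <;>
      · simp [Matrix.kroneckerMap_apply,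
          Matrix.one_apply, Prod.ext_iff, Matrix.map_apply, Matrix.smul_apply,
          Matrix.sub_apply, Matrix.add_apply]
        all_goals by_cases h : i = j <;>
          ((try simp [h, Matrix.vecHead, Matrix.vecTail, Function.comp]); try push_cast; try ring; try field_simp; try ring)
  -- basic identities for H
  have hPH : H⁻¹ * H = 1 := Matrix.nonsing_inv_mul H hHs
  have hHP : H * H⁻¹ = 1 := Matrix.mul_nonsing_inv H hHs
  have hHM : H * Mc = Mc * H := by
    rw [hH]
    simp [Matrix.add_mul, Matrix.mul_add, Matrix.smul_mul, Matrix.mul_smul]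
  have hMP : Mc * H⁻¹ = H⁻¹ * Mc := by
    have h1 : H⁻¹ * (H * (Mc * H⁻¹)) = Mc * H⁻¹ := by
      rw [← Matrix.mul_assoc, hPH, Matrix.one_mul]
    have h2 : H * (Mc * H⁻¹) = Mc * (H * H⁻¹) := by
      rw [← Matrix.mul_assoc, hHM, Matrix.mul_assoc]
    rw [← h1, h2, hHP, Matrix.mul_one]
  have hPH1 : d • H⁻¹ + q • (H⁻¹ * Mc) = 1 := by
    have h : H⁻¹ * (d • 1 + q • Mc) = 1 := by rw [← hH]; exact hPH
    rw [Matrix.mul_add, Matrix.mul_smul, Matrix.mul_smul, Matrix.mul_one] at h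
    exact h
  have hPH2 : d • (H⁻¹ * Mc) + q • (H⁻¹ * Mc * Mc) = Mc := by
    have h := congrArg (fun Z => Z * Mc) hPH1
    simpa [Matrix.add_mul, Matrix.smul_mul, Matrix.one_mul] using h
  -- small 3×3 computations
  have hGK : Gc * K1 = d • W := by
    rw [hGc, hK1, hW, hd]
    ext i j
    fin_cases i <;> fin_cases j <;>
      (simp [Matrix.mul_apply, Fin.sum_univ_three, Matrix.vecHead, Matrix.vecTail];
        try ring; try field_simp; try ring; try field_simp)
  have hFK : Fc * K1 = q • W := by
    rw [hFc, hK1, hW, hq]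
    ext i j
    fin_cases i <;> fin_cases j <;>
      (simp [Matrix.mul_apply, Fin.sum_univ_three, Matrix.vecHead, Matrix.vecTail];
        try ring; try field_simp; try ring; try field_simp)
  have hGK2 : Gc * K2 = d • W2 := by
    rw [hGc, hK2, hW2, hd]
    ext i j
    fin_cases i <;> fin_cases j <;>
      (simp [Matrix.mul_apply, Fin.sum_univ_three, Matrix.vecHead, Matrix.vecTail];
        try ring; try field_simp; try ring; try field_simp)
  have hFK2 : Fc * K2 = q • W2 := by
    rw [hFc, hK2, hW2, hq]
    ext i j
    fin_cases i <;> fin_cases j <;>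
      (simp [Matrix.mul_apply, Fin.sum_univ_three, Matrix.vecHead, Matrix.vecTail];
        try ring; try field_simp; try ring; try field_simp)
  have hFJ : Fc * J = W2 := by
    rw [hFc, hJ, hW2]
    ext i j
    fin_cases i <;> fin_cases j <;>
      (simp [Matrix.mul_apply, Fin.sum_univ_three, Matrix.vecHead, Matrix.vecTail];
        try ring; try field_simp; try ring; try field_simp)
  have hGJ : Gc * J = W - 1 := by
    rw [hGc, hJ, hW]
    ext i j
    fin_cases i <;> fin_cases j <;>
      (simp [Matrix.mul_apply, Fin.sum_univ_three, Matrix.vecHead, Matrix.vecTail];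
        try ring; try field_simp; try ring; try field_simp)
  -- the explicit right inverse
  set X : Matrix (Fin N × Fin 3) (Fin N × Fin 3) ℂ :=
    H⁻¹ ⊗ₖ K1 + (H⁻¹ * Mc) ⊗ₖ K2 - (1 : Matrix (Fin N) (Fin N) ℂ) ⊗ₖ J with hX
  have hLX : ((1 : Matrix (Fin N) (Fin N) ℂ) ⊗ₖ Gc + Mc ⊗ₖ Fc) * X = 1 := by
    rw [hX]
    simp only [Matrix.mul_add, Matrix.mul_sub, Matrix.add_mul, Matrix.sub_mul,
      ← Matrix.mul_kronecker_mul, Matrix.one_mul, Matrix.mul_one]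
    rw [hGK, hFK, hGK2, hFK2, hFJ, hGJ]
    rw [show Mc * (H⁻¹ * Mc) = Mc * H⁻¹ * Mc from (Matrix.mul_assoc _ _ _).symm]
    simp only [hMP]
    simp only [Matrix.kronecker_smul]
    rw [kron_sub, Matrix.one_kronecker_one]
    have e1 : d • (H⁻¹ ⊗ₖ W) + q • ((H⁻¹ * Mc) ⊗ₖ W)
        = (1 : Matrix (Fin N) (Fin N) ℂ) ⊗ₖ W := by
      rw [← Matrix.smul_kronecker, ← Matrix.smul_kronecker, ← Matrix.add_kronecker, hPH1]
    have e2 : d • ((H⁻¹ * Mc) ⊗ₖ W2) + q • ((H⁻¹ * Mc * Mc) ⊗ₖ W2) = Mc ⊗ₖ W2 := by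
      rw [← Matrix.smul_kronecker, ← Matrix.smul_kronecker, ← Matrix.add_kronecker, hPH2]
    rw [← e1, ← e2]
    abel
  have hdet : IsUnit ((1 : Matrix (Fin N) (Fin N) ℂ) ⊗ₖ Gc + Mc ⊗ₖ Fc).det :=
    Matrix.isUnit_det_of_right_inverse hLX
  have hinv : ((1 : Matrix (Fin N) (Fin N) ℂ) ⊗ₖ Gc + Mc ⊗ₖ Fc)⁻¹ = X :=
    Matrix.inv_eq_right_inv hLX
  rw [hL]
  refine ⟨hdet, ?_⟩
  intro i j
  rw [hinv]
  -- complexified C and B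
  have hCmap : ((1 : Matrix (Fin N) (Fin N) ℝ) ⊗ₖ !![(1:ℝ), 0, 0]).map (Complex.ofReal : ℝ → ℂ)
      = (1 : Matrix (Fin N) (Fin N) ℂ) ⊗ₖ (!![1, 0, 0] : Matrix (Fin 1) (Fin 3) ℂ) := by
    ext ⟨i', a⟩ ⟨j', b⟩
    fin_cases a <;> fin_cases b <;> by_cases h : i' = j' <;>
      simp [h, Matrix.kroneckerMap_apply, Matrix.one_apply, Matrix.map_apply]
  have hBmap : ((1 : Matrix (Fin N) (Fin N) ℝ) ⊗ₖ !![(0:ℝ); 0; 1 / τ]).map (Complex.ofReal : ℝ → ℂ)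
      = (1 : Matrix (Fin N) (Fin N) ℂ) ⊗ₖ (!![0; 0; 1/(τ:ℂ)] : Matrix (Fin 3) (Fin 1) ℂ) := by
    ext ⟨i', a⟩ ⟨j', b⟩
    fin_cases a <;> fin_cases b <;> by_cases h : i' = j' <;>
      simp [h, Matrix.kroneckerMap_apply, Matrix.one_apply, Matrix.map_apply]
  rw [hCmap, hBmap]
  -- small 1×1 computations
  have hCKB : (!![1, 0, 0] : Matrix (Fin 1) (Fin 3) ℂ) * K1 * !![0; 0; 1/(τ:ℂ)] = 1 := by
    rw [hK1]
    ext i' j'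
    fin_cases i' <;> fin_cases j' <;>
      (simp [Matrix.mul_apply, Fin.sum_univ_three, Fin.sum_univ_one, Matrix.vecHead, Matrix.vecTail];
        try ring; try field_simp; try ring; try field_simp)
  have hCK2B : (!![1, 0, 0] : Matrix (Fin 1) (Fin 3) ℂ) * K2 * !![0; 0; 1/(τ:ℂ)] = 0 := by
    rw [hK2]
    ext i' j'
    fin_cases i' <;> fin_cases j' <;>
      simp [Matrix.mul_apply, Fin.sum_univ_three, Fin.sum_univ_one]
  have hCJB : (!![1, 0, 0] : Matrix (Fin 1) (Fin 3) ℂ) * J * !![0; 0; 1/(τ:ℂ)] = 0 := by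
    rw [hJ]
    ext i' j'
    fin_cases i' <;> fin_cases j' <;>
      simp [Matrix.mul_apply, Fin.sum_univ_three, Fin.sum_univ_one]
  have hfin : ((1 : Matrix (Fin N) (Fin N) ℂ) ⊗ₖ (!![1, 0, 0] : Matrix (Fin 1) (Fin 3) ℂ)) * X *
      ((1 : Matrix (Fin N) (Fin N) ℂ) ⊗ₖ (!![0; 0; 1/(τ:ℂ)] : Matrix (Fin 3) (Fin 1) ℂ))
      = H⁻¹ ⊗ₖ (1 : Matrix (Fin 1) (Fin 1) ℂ) := by
    rw [hX]
    simp only [Matrix.mul_add, Matrix.mul_sub, Matrix.add_mul, Matrix.sub_mul,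
      ← Matrix.mul_kronecker_mul, Matrix.one_mul, Matrix.mul_one]
    rw [hCKB, hCK2B, hCJB]
    simp [Matrix.kronecker_zero]
  rw [hfin]
  simp [Matrix.kroneckerMap_apply, Matrix.one_apply]
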